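/- In the Dinkelbach iteration δ_{k+1} = Φ(x_{k+1})/Ψ(x_{k+1}) where x_{k+1} minimizes Φ(x) − δ_k Ψ(x) over S, the sequence δ_k is nonincreasing: δ_{k+1} ≤ δ_k, with equality if and only if F(δ_k) = 0, where F(δ) = min_x (Φ(x) − δΨ(x)). -/

import Mathlib

/-- One step of the Dinkelbach iteration: if `δ = Φ(x)/Ψ(x)` and `x'` minimizes
`y ↦ Φ(y) − δΨ(y)`, then `δ' = Φ(x')/Ψ(x') ≤ δ`, with equality iff
`F(δ) = Φ(x') − δΨ(x') = 0`. -/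
theorem dinkelbach_iteration_monotone {S : Type*} [Nonempty S] (Φ Ψ : S → ℝ)
    (hΨ : ∀ y, 0 < Ψ y) (x x' : S)
    (hmin : ∀ y, Φ x' - (Φ x / Ψ x) * Ψ x' ≤ Φ y - (Φ x / Ψ x) * Ψ y) :
    Φ x' / Ψ x' ≤ Φ x / Ψ x ∧
      (Φ x' / Ψ x' = Φ x / Ψ x ↔ Φ x' - (Φ x / Ψ x) * Ψ x' = 0) := by
  have hx := (hΨ x).ne'
  have hx' := (hΨ x').ne'
  have hzero : Φ x - (Φ x / Ψ x) * Ψ x = 0 := by field_simp; ring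
  have h0 : Φ x' - (Φ x / Ψ x) * Ψ x' ≤ 0 := (hmin x).trans_eq hzero
  constructor
  · rw [div_le_iff₀ (hΨ x')]
    linarith
  · rw [div_eq_div_iff hx' hx, sub_eq_zero, div_mul_eq_mul_div, eq_div_iff hx]
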